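/- Let G be a connected Z₁-free graph (Z₁ is the graph obtained from a triangle by attaching one pendant vertex, i.e., the paw). If G contains a triangle, then G is a complete multipartite graph. -/

import Mathlib

open SimpleGraph

def IsCycleEmb {V : Type*} (G : SimpleGraph V) (n : ℕ) (f : ZMod n → V) : Prop :=
  3 ≤ n ∧ Function.Injective f ∧ ∀ i : ZMod n, G.Adj (f i) (f (i + 1))

def IsLongestCycle {V : Type*} (G : SimpleGraph V) (n : ℕ) (f : ZMod n → V) : Prop :=
  IsCycleEmb G n f ∧ ∀ (m : ℕ) (g : ZMod m → V), IsCycleEmb G m g → m ≤ n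

def IsDominatingCycle {V : Type*} (G : SimpleGraph V) (n : ℕ) (f : ZMod n → V) : Prop :=
  IsCycleEmb G n f ∧ ∀ a b : V, G.Adj a b → a ∈ Set.range f ∨ b ∈ Set.range f

def IsCompOutside {V : Type*} (G : SimpleGraph V) (C : Set V) (H : Set V) : Prop :=
  H.Nonempty ∧ Disjoint H C ∧ (G.induce H).Connected ∧
    ∀ a ∈ H, ∀ b : V, G.Adj a b → b ∉ C → b ∈ H

def TwoConnected {V : Type*} (G : SimpleGraph V) : Prop :=
  3 ≤ Nat.card V ∧ ∀ v : V, (G.induce ({v}ᶜ : Set V)).Connected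

def KConnected {V : Type*} (G : SimpleGraph V) (k : ℕ) : Prop :=
  k < Nat.card V ∧ ∀ S : Set V, S.ncard < k → (G.induce (Sᶜ : Set V)).Connected

def HFree {W V : Type*} (H : SimpleGraph W) (G : SimpleGraph V) : Prop :=
  ¬ Nonempty (H ↪g G)

def IsCompleteMultipartite {V : Type*} (G : SimpleGraph V) : Prop :=
  ∃ s : Setoid V, ∀ a b : V, G.Adj a b ↔ ¬ s.r a b

/-- `W = K₁ + 3K₂`: vertex 0 joined to three disjoint edges 12, 34, 56. -/
def Wgraph : SimpleGraph (Fin 7) :=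
  SimpleGraph.fromRel (fun a b =>
    a = 0 ∨ (a = 1 ∧ b = 2) ∨ (a = 3 ∧ b = 4) ∨ (a = 5 ∧ b = 6))

/-- `Z₁`, the paw: triangle 012 plus pendant edge 23. -/
def pawGraph : SimpleGraph (Fin 4) :=
  SimpleGraph.fromRel (fun a b =>
    (a = 0 ∧ b = 1) ∨ (a = 1 ∧ b = 2) ∨ (a = 0 ∧ b = 2) ∨ (a = 2 ∧ b = 3))

/-- The claw `K₁,₃`. -/
def clawGraph : SimpleGraph (Fin 4) :=
  SimpleGraph.fromRel (fun a _ => a = 0)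

/-- `K₄` minus the edge 23. -/
def K4minusGraph : SimpleGraph (Fin 4) :=
  SimpleGraph.fromRel (fun a b => ¬((a = 2 ∧ b = 3) ∨ (a = 3 ∧ b = 2)))

/-- `K₁,₃**`: spider with legs of lengths 2, 2, 1 (center 0, legs 0-1-2, 0-3-4, 0-5). -/
def spider221 : SimpleGraph (Fin 6) :=
  SimpleGraph.fromRel (fun a b =>
    (a = 0 ∧ b = 1) ∨ (a = 1 ∧ b = 2) ∨ (a = 0 ∧ b = 3) ∨ (a = 3 ∧ b = 4) ∨ (a = 0 ∧ b = 5))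

/-- The theta graph `A_s`: two vertices joined by three internally disjoint paths,
each with `s` internal vertices. -/
def thetaGraph (s : ℕ) : SimpleGraph (Fin 2 ⊕ Fin 3 × Fin s) :=
  SimpleGraph.fromRel (fun a b =>
    (∃ (j : Fin 3) (k : Fin s), a = Sum.inl 0 ∧ b = Sum.inr (j, k) ∧ (k : ℕ) = 0) ∨
    (∃ (j : Fin 3) (k : Fin s), a = Sum.inl 1 ∧ b = Sum.inr (j, k) ∧ (k : ℕ) = s - 1) ∨
    (∃ (j : Fin 3) (k l : Fin s), a = Sum.inr (j, k) ∧ b = Sum.inr (j, l) ∧ (l : ℕ) = (k : ℕ) + 1))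

/-- `A′_s = 2K₁ + sK₂`. -/
def APrime (s : ℕ) : SimpleGraph (Fin 2 ⊕ Fin s × Fin 2) :=
  SimpleGraph.fromRel (fun a b =>
    (∃ (i : Fin 2) (x : Fin s × Fin 2), a = Sum.inl i ∧ b = Sum.inr x) ∨
    (∃ j : Fin s, a = Sum.inr (j, 0) ∧ b = Sum.inr (j, 1)))

/-- `A″_s = K₂ + (2K₂ ∪ K_s)`. -/
def ADoublePrime (s : ℕ) : SimpleGraph (Fin 2 ⊕ (Fin 2 × Fin 2 ⊕ Fin s)) :=
  SimpleGraph.fromRel (fun a b =>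
    (∃ i : Fin 2, a = Sum.inl i) ∨
    (∃ j : Fin 2, a = Sum.inr (Sum.inl (j, 0)) ∧ b = Sum.inr (Sum.inl (j, 1))) ∨
    (∃ p q : Fin s, a = Sum.inr (Sum.inr p) ∧ b = Sum.inr (Sum.inr q)))

/-- `A_s⁽¹⁾`: two disjoint triangles joined by three vertex-disjoint paths with `s`
internal vertices each. -/
def AOne (s : ℕ) : SimpleGraph (Fin 2 × Fin 3 ⊕ Fin 3 × Fin s) :=
  SimpleGraph.fromRel (fun a b =>
    (∃ (t : Fin 2) (i j : Fin 3), a = Sum.inl (t, i) ∧ b = Sum.inl (t, j)) ∨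
    (∃ (j : Fin 3) (k : Fin s), a = Sum.inl (0, j) ∧ b = Sum.inr (j, k) ∧ (k : ℕ) = 0) ∨
    (∃ (j : Fin 3) (k : Fin s), a = Sum.inl (1, j) ∧ b = Sum.inr (j, k) ∧ (k : ℕ) = s - 1) ∨
    (∃ (j : Fin 3) (k l : Fin s), a = Sum.inr (j, k) ∧ b = Sum.inr (j, l) ∧ (l : ℕ) = (k : ℕ) + 1))

/-- `A_s⁽⁵⁾`: vertices `x₁, x₂` and `y_{i,j}`; edges `x₁x₂`, `y_{1,j}y_{2,j}`, `x_i y_{i,j}`. -/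
def AFive (s : ℕ) : SimpleGraph (Fin 2 ⊕ Fin 2 × Fin s) :=
  SimpleGraph.fromRel (fun a b =>
    (a = Sum.inl 0 ∧ b = Sum.inl 1) ∨
    (∃ j : Fin s, a = Sum.inr (0, j) ∧ b = Sum.inr (1, j)) ∨
    (∃ (i : Fin 2) (j : Fin s), a = Sum.inl i ∧ b = Sum.inr (i, j)))

lemma pawL1 {V : Type*} {G : SimpleGraph V} (hfree : HFree pawGraph G) {x y z w : V}
    (hxy : G.Adj x y) (hyz : G.Adj y z) (hxz : G.Adj x z) (hwx : G.Adj w x)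
    (hwy : ¬ G.Adj w y) (hwz : ¬ G.Adj w z) : False := by
  have hwy' : w ≠ y := by rintro rfl; exact hwz hyz
  have hwz' : w ≠ z := by rintro rfl; exact hwy hyz.symm
  refine hfree ⟨⟨⟨![y, z, x, w], ?_⟩, ?_⟩⟩
  · intro i j
    fin_cases i <;> fin_cases j <;>
      simp_all [hxy.ne, hyz.ne, hxz.ne, hwx.ne, (G.ne_of_adj hxy).symm, eq_comm] <;>
      first
        | rfl
        | (intro h; first
            | exact hyz.ne h | exact hxy.ne h.symm | exact hxz.ne h.symm
            | exact hwx.ne h.symm | exact hwy' h.symm | exact hwz' h.symm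
            | exact hyz.ne h.symm | exact hwy' h | exact hwz' h | exact hwx.ne h)
  · intro a b
    fin_cases a <;> fin_cases b <;>
      simp [pawGraph, SimpleGraph.fromRel_adj] <;>
      first
        | exact fun h => G.irrefl h
        | exact hyz | exact hyz.symm | exact hxy | exact hxy.symm
        | exact hxz | exact hxz.symm | exact hwx | exact hwx.symm
        | exact hwy | exact hwz | exact fun h => hwy h.symm | exact fun h => hwz h.symm
        | (constructor <;> intro h <;> first
            | exact hyz | exact hyz.symm | exact hxy.symm | exact hxy
            | exact hxz.symm | exact hxz | exact hwx.symm | exact hwx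
            | exact absurd h hwy | exact absurd h.symm hwy
            | exact absurd h hwz | exact absurd h.symm hwz
            | exact absurd h (G.loopless _) | trivial)
lemma reachInd {V : Type*} {G : SimpleGraph V} {P : V → Prop}
    (hstep : ∀ u v : V, G.Adj u v → P u → P v) {a b : V}
    (r : G.Reachable a b) (ha : P a) : P b := by
  obtain ⟨w⟩ := r
  induction w with
  | nil => exact ha
  | cons h p ih => exact ih (hstep _ _ h ha)

/-- Olariu: a connected paw-free graph containing a triangle is complete multipartite. -/
theorem stmt5 {V : Type*} [Fintype V] (G : SimpleGraph V) (hconn : G.Connected)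
    (hfree : HFree pawGraph G)
    (htri : ∃ a b c : V, G.Adj a b ∧ G.Adj b c ∧ G.Adj a c) :
    _root_.IsCompleteMultipartite G := by
  -- "two": a neighbor of one vertex of a triangle is adjacent to another triangle vertex
  have two : ∀ p q r u : V, G.Adj p q → G.Adj p r → G.Adj q r → G.Adj u p →
      G.Adj u q ∨ G.Adj u r := by
    intro p q r u hpq hpr hqr hup
    by_contra h
    push_neg at h
    exact pawL1 hfree hpq hqr hpr hup h.1 h.2
  -- every vertex is in a triangle
  set P : V → Prop := fun v => ∃ x y, G.Adj v x ∧ G.Adj v y ∧ G.Adj x y with hP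
  have hcommon : ∀ u v : V, G.Adj u v → P v → ∃ t, G.Adj u t ∧ G.Adj v t := by
    intro u v huv ⟨x, y, hvx, hvy, hxy⟩
    rcases two v x y u hvx hvy hxy huv with h | h
    · exact ⟨x, h, hvx⟩
    · exact ⟨y, h, hvy⟩
  have hPall : ∀ v : V, P v := by
    obtain ⟨a, b, c, hab, hbc, hac⟩ := htri
    intro v
    refine reachInd (fun u v huv hu => ?_) (hconn.preconnected a v) ⟨b, c, hab, hac, hbc⟩
    obtain ⟨t, hvt, hut⟩ := hcommon v u huv.symm hu
    exact ⟨u, t, huv.symm, hvt, hut⟩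
  -- key: every vertex is adjacent to an endpoint of every edge
  have key : ∀ a c b : V, G.Adj a c → G.Adj b a ∨ G.Adj b c := by
    intro a c b hac
    by_contra h
    push_neg at h
    obtain ⟨hba, hbc⟩ := h
    obtain ⟨d, hcd, had⟩ := hcommon c a hac.symm (hPall a)
    -- triangle a c d
    set Q : V → Prop := fun v => (v = a ∨ v = c ∨ v = d) ∨
      (G.Adj v a ∧ G.Adj v c) ∨ (G.Adj v a ∧ G.Adj v d) ∨ (G.Adj v c ∧ G.Adj v d) with hQ
    have upgrade : ∀ u : V, (G.Adj u a ∨ G.Adj u c ∨ G.Adj u d) → Q u := by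
      intro u hu
      rcases hu with h1 | h1 | h1
      · rcases two a c d u hac had hcd h1 with h2 | h2
        · exact Or.inr (Or.inl ⟨h1, h2⟩)
        · exact Or.inr (Or.inr (Or.inl ⟨h1, h2⟩))
      · rcases two c a d u hac.symm hcd had h1 with h2 | h2
        · exact Or.inr (Or.inl ⟨h2, h1⟩)
        · exact Or.inr (Or.inr (Or.inr ⟨h1, h2⟩))
      · rcases two d a c u had.symm hcd.symm hac h1 with h2 | h2
        · exact Or.inr (Or.inr (Or.inl ⟨h2, h1⟩))
        · exact Or.inr (Or.inr (Or.inr ⟨h2, h1⟩))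
    have hstep : ∀ v u : V, G.Adj v u → Q v → Q u := by
      intro v u hvu hv
      refine upgrade u ?_
      rcases hv with (rfl | rfl | rfl) | ⟨h1, h2⟩ | ⟨h1, h2⟩ | ⟨h1, h2⟩
      · exact Or.inl hvu.symm
      · exact Or.inr (Or.inl hvu.symm)
      · exact Or.inr (Or.inr hvu.symm)
      · rcases two v a c u h1 h2 hac hvu.symm with h | h
        · exact Or.inl h
        · exact Or.inr (Or.inl h)
      · rcases two v a d u h1 h2 had hvu.symm with h | h
        · exact Or.inl h
        · exact Or.inr (Or.inr h)
      · rcases two v c d u h1 h2 hcd hvu.symm with h | h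
        · exact Or.inr (Or.inl h)
        · exact Or.inr (Or.inr h)
    have hQb : Q b := reachInd hstep (hconn.preconnected a b) (Or.inl (Or.inl rfl))
    rcases hQb with (rfl | rfl | rfl) | ⟨h1, h2⟩ | ⟨h1, h2⟩ | ⟨h1, h2⟩
    · exact hbc hac
    · exact hba hac.symm
    · exact hba had.symm
    · exact hba h1
    · exact hba h1
    · exact hbc h1
  refine ⟨⟨fun a b => ¬ G.Adj a b, ⟨fun x => G.irrefl, fun h h2 => h h2.symm,
    fun {a b c} hab hbc hac => ?_⟩⟩, fun a b => ?_⟩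
  · rcases key a c b hac with h | h
    · exact hab h.symm
    · exact hbc h
  · show G.Adj a b ↔ ¬ ¬ G.Adj a b
    exact not_not.symm
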